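/- For the Variance Gamma Lévy density restricted to x > 0, ν(x) = C e^{-Mx}/x with C > 0, M > 1: lim_{k↘1} ∫_0^1 [(t - k) J(t,M) + (1-t) J(t,M-1)] dt where J(t,a) = C ∫_{log((k-t)/(1-t))}^∞ e^{-ay} dy/y, evaluated at k = K/S_0, equals C·arctanh(1/(2M-1)). -/

import Mathlib

open Real MeasureTheory Set Filter Topology

/-- `J(k, t, a) = C ∫_{log((k-t)/(1-t))}^∞ e^{-ay}/y dy`. -/
noncomputable def Jfun (C k t a : ℝ) : ℝ :=
  C * ∫ y in Ioi (Real.log ((k - t) / (1 - t))), Real.exp (-a * y) * (1 / y)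

namespace VGAux

lemma gMeas (a : ℝ) : Measurable (fun y : ℝ => Real.exp (-a*y) * (1/y)) := by
  fun_prop

lemma gInt {a δ : ℝ} (ha : 0 < a) (hδ : 0 < δ) :
    IntegrableOn (fun y : ℝ => Real.exp (-a*y) * (1/y)) (Ioi δ) := by
  refine Integrable.mono' ((exp_neg_integrableOn_Ioi δ ha).mul_const (1/δ))
    (gMeas a).aestronglyMeasurable ?_
  filter_upwards [ae_restrict_mem measurableSet_Ioi] with y hy
  have hy0 : 0 < y := hδ.trans hy
  rw [Real.norm_eq_abs, abs_of_nonneg (by positivity)]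
  exact mul_le_mul_of_nonneg_left (one_div_le_one_div_of_le hδ hy.le) (Real.exp_pos _).le

lemma indicator_int_eq {g : ℝ → ℝ} {c δ : ℝ} (h : c ≤ δ) :
    ∫ y in Ioi c, (Ioi δ).indicator g y = ∫ y in Ioi δ, g y := by
  rw [integral_indicator measurableSet_Ioi, Measure.restrict_restrict measurableSet_Ioi,
    inter_eq_self_of_subset_left (Ioi_subset_Ioi h)]

lemma ae_ne_vol (δ₀ : ℝ) : ∀ᵐ (y : ℝ), y ≠ δ₀ := by
  refine ae_iff.mpr ?_
  have : {y : ℝ | ¬ y ≠ δ₀} = {δ₀} := by ext y; simp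
  rw [this]; exact Real.volume_singleton

lemma EcontAt {g : ℝ → ℝ} (hm : Measurable g) {c δ₀ : ℝ} (hc : c < δ₀)
    (hint : IntegrableOn g (Ioi c)) :
    ContinuousAt (fun δ => ∫ y in Ioi δ, g y) δ₀ := by
  have hev : ∀ᶠ δ in 𝓝 δ₀, ∫ y in Ioi c, (Ioi δ).indicator g y = ∫ y in Ioi δ, g y := by
    filter_upwards [eventually_gt_nhds hc] with δ hδ
    exact indicator_int_eq hδ.le
  have hcont : ContinuousAt (fun δ => ∫ y in Ioi c, (Ioi δ).indicator g y) δ₀ := by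
    apply continuousAt_of_dominated (bound := fun y => ‖g y‖)
    · exact Eventually.of_forall fun δ =>
        ((hm.indicator measurableSet_Ioi).aestronglyMeasurable)
    · exact Eventually.of_forall fun δ =>
        (Eventually.of_forall fun y => norm_indicator_le_norm_self g y)
    · exact hint.norm
    · filter_upwards [ae_restrict_of_ae (ae_ne_vol δ₀)] with y hy
      rcases lt_or_gt_of_ne hy with h | h
      · refine (continuousAt_const (y := (0:ℝ))).congr ?_
        filter_upwards [eventually_gt_nhds h] with δ hδ
        simp [Set.indicator_of_notMem, mem_Ioi, not_lt.mpr hδ.le]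
      · refine (continuousAt_const (y := g y)).congr ?_
        filter_upwards [eventually_lt_nhds h] with δ hδ
        simp [Set.indicator_of_mem, mem_Ioi, hδ]
  exact hcont.congr hev

lemma Etendsto {g : ℝ → ℝ} (hm : Measurable g) {c : ℝ}
    (hint : IntegrableOn g (Ioi c)) :
    Tendsto (fun δ => ∫ y in Ioi δ, g y) (𝓝[>] c) (𝓝 (∫ y in Ioi c, g y)) := by
  have h := tendsto_integral_filter_of_dominated_convergence (l := 𝓝[>] c)
    (μ := volume.restrict (Ioi c))
    (F := fun δ y => (Ioi δ).indicator g y) (f := g) (bound := fun y => ‖g y‖)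
    (Eventually.of_forall fun δ =>
      (hm.indicator measurableSet_Ioi).aestronglyMeasurable)
    (Eventually.of_forall fun δ =>
      (Eventually.of_forall fun y => norm_indicator_le_norm_self g y))
    hint.norm ?_
  · refine Tendsto.congr' ?_ h
    filter_upwards [self_mem_nhdsWithin] with δ (hδ : c < δ)
    exact indicator_int_eq hδ.le
  · filter_upwards [ae_restrict_mem measurableSet_Ioi] with y hy
    refine tendsto_const_nhds.congr' ?_
    filter_upwards [Ioo_mem_nhdsGT_of_mem ⟨le_refl c, hy⟩] with δ hδ
    simp [Set.indicator_of_mem, mem_Ioi, hδ.2]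

lemma exp_slice {a b y : ℝ} (hab : a ≤ b) (hy : 0 < y) :
    ∫ s in Ioc a b, Real.exp (-s*y) =
      Real.exp (-a*y) * (1/y) - Real.exp (-b*y) * (1/y) := by
  rw [← intervalIntegral.integral_of_le hab]
  have key : ∫ s in a..b, Real.exp (-s*y)
      = (-(1/y) * Real.exp (-b*y)) - (-(1/y) * Real.exp (-a*y)) := by
    refine intervalIntegral.integral_eq_sub_of_hasDerivAt
      (f := fun s => -(1/y) * Real.exp (-s*y)) (fun s _ => ?_) ?_
    · have h1 : HasDerivAt (fun s : ℝ => -s*y) (-y) s := by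
        simpa [neg_mul, Pi.neg_def] using ((hasDerivAt_id s).mul_const y).neg
      have h2 := (Real.hasDerivAt_exp (-s*y)).comp s h1
      have h3 := h2.const_mul (-(1/y))
      convert h3 using 1
      case e'_8 => rfl
      case e'_9 => field_simp
      case e'_4 => rfl
    · apply Continuous.intervalIntegrable; fun_prop
  rw [key]; ring

lemma exp_prod_integrable {a b : ℝ} (ha : 0 < a) :
    Integrable (fun p : ℝ × ℝ => Real.exp (-p.2 * p.1))
      ((volume.restrict (Ioi (0:ℝ))).prod (volume.restrict (Ioc a b))) := by
  have hdom : Integrable (fun p : ℝ × ℝ => Real.exp (-a * p.1) * 1)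
      ((volume.restrict (Ioi (0:ℝ))).prod (volume.restrict (Ioc a b))) :=
    Integrable.mul_prod (exp_neg_integrableOn_Ioi 0 ha)
      ((integrableOn_const_iff (C := (1:ℝ))).mpr (Or.inr measure_Ioc_lt_top))
  refine hdom.mono' (Measurable.aestronglyMeasurable
    (Real.measurable_exp.comp ((measurable_snd.neg).mul measurable_fst))) ?_
  rw [Measure.prod_restrict]
  filter_upwards [ae_restrict_mem (measurableSet_Ioi.prod measurableSet_Ioc)] with p hp
  obtain ⟨hp1, hp2⟩ := hp
  rw [Real.norm_eq_abs, abs_of_nonneg (Real.exp_pos _).le, mul_one]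
  exact Real.exp_le_exp.mpr (by nlinarith [mem_Ioi.mp hp1, (mem_Ioc.mp hp2).1])

lemma frullani {a b : ℝ} (ha : 0 < a) (hab : a < b) :
    ∫ y in Ioi (0:ℝ), (Real.exp (-a*y) * (1/y) - Real.exp (-b*y) * (1/y))
      = Real.log (b/a) := by
  have hswap := integral_integral_swap (μ := volume.restrict (Ioi (0:ℝ)))
    (ν := volume.restrict (Ioc a b)) (f := fun y s => Real.exp (-s*y))
    (exp_prod_integrable ha)
  have h1 : ∫ y in Ioi (0:ℝ), (Real.exp (-a*y) * (1/y) - Real.exp (-b*y) * (1/y))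
      = ∫ y in Ioi (0:ℝ), ∫ s in Ioc a b, Real.exp (-s*y) := by
    refine setIntegral_congr_fun measurableSet_Ioi fun y hy => ?_
    exact (exp_slice hab.le (mem_Ioi.mp hy)).symm
  have h2 : ∫ s in Ioc a b, ∫ y in Ioi (0:ℝ), Real.exp (-s*y)
      = ∫ s in Ioc a b, 1/s := by
    refine setIntegral_congr_fun measurableSet_Ioc fun s hs => ?_
    have hs0 : 0 < s := ha.trans_le (mem_Ioc.mp hs).1.le
    have := integral_comp_mul_left_Ioi (fun x => Real.exp (-x)) 0 hs0
    simp only [mul_zero, neg_mul] at this ⊢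
    rw [this, integral_exp_neg_Ioi, smul_eq_mul]
    simp [one_div]
  have h3 : ∫ s in Ioc a b, (1:ℝ)/s = Real.log (b/a) := by
    rw [← intervalIntegral.integral_of_le hab.le]
    refine integral_one_div fun h => ?_
    rw [uIcc_of_le hab.le, Set.mem_Icc] at h
    linarith
  rw [h1, hswap, h2, h3]

/-- `E a δ = ∫_{Ioi δ} e^{-ay}/y dy`. -/
noncomputable def Efun (a δ : ℝ) : ℝ := ∫ y in Ioi δ, Real.exp (-a*y) * (1/y)

lemma Jfun_eq (C k t a : ℝ) :
    Jfun C k t a = C * Efun a (Real.log ((k - t) / (1 - t))) := rfl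

lemma E_nonneg (a : ℝ) {δ : ℝ} (hδ : 0 < δ) : 0 ≤ Efun a δ := by
  refine setIntegral_nonneg measurableSet_Ioi fun y hy => ?_
  have : (0:ℝ) < y := hδ.trans hy
  positivity

lemma E_mono {a : ℝ} (ha : 0 < a) {δ₁ δ₂ : ℝ} (h0 : 0 < δ₁) (h : δ₁ ≤ δ₂) :
    Efun a δ₂ ≤ Efun a δ₁ := by
  refine setIntegral_mono_set (gInt ha h0) ?_ (HasSubset.Subset.eventuallyLE (Ioi_subset_Ioi h))
  filter_upwards [ae_restrict_mem measurableSet_Ioi] with y hy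
  have : (0:ℝ) < y := h0.trans hy
  positivity

lemma E_contAt {a δ₀ : ℝ} (ha : 0 < a) (hδ : 0 < δ₀) : ContinuousAt (Efun a) δ₀ :=
  EcontAt (gMeas a) (by linarith : δ₀/2 < δ₀) (gInt ha (by linarith))

lemma E_bound {a δ : ℝ} (ha : 0 < a) (hδ : 0 < δ) (hδ1 : δ ≤ 1) :
    Efun a δ ≤ -Real.log δ + 1/a := by
  have hsplit : Efun a δ = (∫ y in Ioc δ 1, Real.exp (-a*y) * (1/y))
      + ∫ y in Ioi (1:ℝ), Real.exp (-a*y) * (1/y) := by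
    rw [Efun, ← Ioc_union_Ioi_eq_Ioi hδ1]
    exact setIntegral_union (Set.Ioc_disjoint_Ioi le_rfl) measurableSet_Ioi
      ((gInt ha hδ).mono_set Ioc_subset_Ioi_self) ((gInt ha hδ).mono_set (Ioi_subset_Ioi hδ1))
  have h1 : (∫ y in Ioc δ 1, Real.exp (-a*y) * (1/y)) ≤ ∫ y in Ioc δ 1, 1/y := by
    refine setIntegral_mono_on ((gInt ha hδ).mono_set Ioc_subset_Ioi_self) ?_
      measurableSet_Ioc fun y hy => ?_
    · refine Integrable.mono' ((integrableOn_const_iff (C := 1/δ)).mpr (Or.inr measure_Ioc_lt_top))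
        (by fun_prop) ?_
      filter_upwards [ae_restrict_mem measurableSet_Ioc] with y hy
      have hy0 : (0:ℝ) < y := hδ.trans hy.1
      rw [Real.norm_eq_abs, abs_of_nonneg (by positivity : (0:ℝ) ≤ 1/y)]
      exact one_div_le_one_div_of_le hδ hy.1.le
    · have hy0 : 0 < y := hδ.trans hy.1
      nlinarith [Real.exp_le_one_iff.mpr (by nlinarith : -a*y ≤ 0), one_div_pos.mpr hy0]
  have h1' : (∫ y in Ioc δ 1, (1:ℝ)/y) = -Real.log δ := by
    rw [← intervalIntegral.integral_of_le hδ1]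
    rw [integral_one_div (by rw [uIcc_of_le hδ1, Set.mem_Icc]; intro h; linarith)]
    rw [one_div, Real.log_inv]
  have h2 : (∫ y in Ioi (1:ℝ), Real.exp (-a*y) * (1/y)) ≤ ∫ y in Ioi (1:ℝ), Real.exp (-a*y) := by
    refine setIntegral_mono_on ((gInt ha hδ).mono_set (Ioi_subset_Ioi hδ1))
      (exp_neg_integrableOn_Ioi 1 ha) measurableSet_Ioi fun y hy => ?_
    have hy1 : (1:ℝ) < y := hy
    nlinarith [Real.exp_pos (-a*y), one_div_le_one_div_of_le one_pos hy1.le]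
  have h2' : (∫ y in Ioi (1:ℝ), Real.exp (-a*y)) ≤ 1/a := by
    have := integral_comp_mul_left_Ioi (fun x => Real.exp (-x)) 1 ha
    simp only [mul_one, neg_mul] at this ⊢
    rw [this, integral_exp_neg_Ioi, smul_eq_mul]
    rw [one_div]
    have h3 : Real.exp (-a) ≤ 1 := Real.exp_le_one_iff.mpr (by linarith)
    nlinarith [inv_pos.mpr ha]
  rw [hsplit]
  linarith

/-- `D M δ = ∫_{Ioi δ} (e^{-(M-1)y} - e^{-My})/y dy`. -/
noncomputable def Dfun (M δ : ℝ) : ℝ :=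
  ∫ y in Ioi δ, (Real.exp (-(M-1)*y) * (1/y) - Real.exp (-M*y) * (1/y))

lemma fMeas (M : ℝ) :
    Measurable (fun y : ℝ => Real.exp (-(M-1)*y) * (1/y) - Real.exp (-M*y) * (1/y)) := by
  fun_prop

lemma f_nonneg {M : ℝ} (hM : 1 < M) {y : ℝ} (hy : 0 < y) :
    0 ≤ Real.exp (-(M-1)*y) * (1/y) - Real.exp (-M*y) * (1/y) := by
  have h : Real.exp (-M*y) ≤ Real.exp (-(M-1)*y) := Real.exp_le_exp.mpr (by nlinarith)
  have : (0:ℝ) ≤ 1/y := by positivity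
  nlinarith

lemma fInt {M : ℝ} (hM : 1 < M) :
    IntegrableOn (fun y : ℝ => Real.exp (-(M-1)*y) * (1/y) - Real.exp (-M*y) * (1/y))
      (Ioi (0:ℝ)) := by
  refine Integrable.mono' (exp_neg_integrableOn_Ioi 0 (by linarith : (0:ℝ) < M - 1))
    (fMeas M).aestronglyMeasurable ?_
  filter_upwards [ae_restrict_mem measurableSet_Ioi] with y hy
  have hy0 : (0:ℝ) < y := hy
  rw [Real.norm_eq_abs, abs_of_nonneg (f_nonneg hM hy0)]
  have hexp : Real.exp (-M*y) = Real.exp (-(M-1)*y) * Real.exp (-y) := by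
    rw [← Real.exp_add]; ring_nf
  have h1 : 1 - Real.exp (-y) ≤ y := by nlinarith [Real.add_one_le_exp (-y)]
  have h2 : Real.exp (-y) ≤ 1 := Real.exp_le_one_iff.mpr (by linarith)
  have h3 : (0:ℝ) < Real.exp (-(M-1)*y) := Real.exp_pos _
  rw [hexp]
  rw [show Real.exp (-(M-1)*y) * (1/y) - Real.exp (-(M-1)*y) * Real.exp (-y) * (1/y)
      = Real.exp (-(M-1)*y) * ((1 - Real.exp (-y)) * (1/y)) by ring]
  have h4 : (1 - Real.exp (-y)) * (1/y) ≤ 1 := by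
    rw [mul_one_div]
    exact (div_le_one hy0).mpr h1
  nlinarith [mul_nonneg (by linarith : (0:ℝ) ≤ 1 - Real.exp (-y)) (by positivity : (0:ℝ) ≤ 1/y)]

lemma D_tendsto {M : ℝ} (hM : 1 < M) :
    Tendsto (Dfun M) (𝓝[>] (0:ℝ)) (𝓝 (Real.log (M/(M-1)))) := by
  have h := Etendsto (fMeas M) (fInt hM)
  rwa [frullani (by linarith : (0:ℝ) < M - 1) (by linarith : M - 1 < M)] at h

lemma D_nonneg {M : ℝ} (hM : 1 < M) {δ : ℝ} (hδ : 0 < δ) : 0 ≤ Dfun M δ :=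
  setIntegral_nonneg measurableSet_Ioi fun y hy => f_nonneg hM (hδ.trans hy)

lemma D_le {M : ℝ} (hM : 1 < M) {δ : ℝ} (hδ : 0 < δ) :
    Dfun M δ ≤ Real.log (M/(M-1)) := by
  rw [← frullani (by linarith : (0:ℝ) < M - 1) (by linarith : M - 1 < M)]
  refine setIntegral_mono_set (fInt hM) ?_
    (HasSubset.Subset.eventuallyLE (Ioi_subset_Ioi hδ.le))
  filter_upwards [ae_restrict_mem measurableSet_Ioi] with y hy
  exact f_nonneg hM hy

lemma D_contAt {M : ℝ} (hM : 1 < M) {δ₀ : ℝ} (hδ₀ : 0 < δ₀) :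
    ContinuousAt (Dfun M) δ₀ :=
  EcontAt (fMeas M) (by linarith : δ₀/2 < δ₀)
    ((fInt hM).mono_set (Ioi_subset_Ioi (by linarith)))

lemma D_eq {M : ℝ} (hM : 1 < M) {δ : ℝ} (hδ : 0 < δ) :
    Dfun M δ = Efun (M-1) δ - Efun M δ :=
  integral_sub (gInt (by linarith) hδ) (gInt (by linarith) hδ)

-- properties of the lower endpoint l k t = log ((k-t)/(1-t))
lemma l_ge {k t : ℝ} (hk : 1 < k) (ht : t ∈ Ioo (0:ℝ) 1) :
    Real.log k ≤ Real.log ((k - t) / (1 - t)) := by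
  obtain ⟨ht0, ht1⟩ := ht
  refine Real.log_le_log (by linarith) ?_
  rw [le_div_iff₀ (by linarith)]
  nlinarith

lemma l_pos {k t : ℝ} (hk : 1 < k) (ht : t ∈ Ioo (0:ℝ) 1) :
    0 < Real.log ((k - t) / (1 - t)) :=
  lt_of_lt_of_le (Real.log_pos hk) (l_ge hk ht)

lemma l_tendsto {t : ℝ} (ht : t ∈ Ioo (0:ℝ) 1) :
    Tendsto (fun k => Real.log ((k - t) / (1 - t))) (𝓝[>] (1:ℝ)) (𝓝[>] (0:ℝ)) := by
  obtain ⟨ht0, ht1⟩ := ht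
  rw [tendsto_nhdsWithin_iff]
  constructor
  · have hcont : ContinuousAt (fun k : ℝ => Real.log ((k - t) / (1 - t))) 1 := by
      have h1 : ContinuousAt (fun k : ℝ => (k - t) / (1 - t)) 1 := by fun_prop (disch := intros; (try intro); linarith)
      refine (Real.continuousAt_log ?_).comp h1
      show (1 - t) / (1 - t) ≠ 0
      have h0 : (0:ℝ) < 1 - t := by linarith
      positivity
    have h2 := hcont.tendsto
    have h3 : Real.log ((1 - t) / (1 - t)) = 0 := by
      rw [div_self (by intro h; linarith [sub_eq_zero.mp h] : (1:ℝ) - t ≠ 0), Real.log_one]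
    rw [h3] at h2
    exact h2.mono_left nhdsWithin_le_nhds
  · filter_upwards [self_mem_nhdsWithin] with k (hk : 1 < k)
    exact l_pos hk ⟨ht0, ht1⟩

end VGAux

open VGAux in
/-- ATM limit for the VG Asian call coefficient: for `C > 0`, `M > 1`,
`lim_{k↘1} ∫₀¹ [(t - k) J(t,M) + (1-t) J(t,M-1)] dt = C·arctanh(1/(2M-1))`,
where `arctanh x = (1/2) log((1+x)/(1-x))`. -/
theorem vg_atm_limit (C M : ℝ) (hC : 0 < C) (hM : 1 < M) :
    Tendsto
      (fun k : ℝ => ∫ t in Ioo (0 : ℝ) 1,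
        ((t - k) * Jfun C k t M + (1 - t) * Jfun C k t (M - 1)))
      (𝓝[>] 1)
      (𝓝 (C * ((1 / 2) * Real.log ((1 + 1 / (2 * M - 1)) / (1 - 1 / (2 * M - 1)))))) := by
  have hM0 : (0:ℝ) < M := by linarith
  have hM1 : (0:ℝ) < M - 1 := by linarith
  set R := Real.log (M/(M-1)) with hRdef
  have hR0 : 0 ≤ R := Real.log_nonneg (by rw [le_div_iff₀ hM1]; linarith)
  -- continuity of t ↦ log((k-t)/(1-t)) on Ioo 0 1
  have hlcont : ∀ {k : ℝ}, 1 < k →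
      ContinuousOn (fun t => Real.log ((k - t) / (1 - t))) (Ioo (0:ℝ) 1) := by
    intro k hk
    refine ContinuousOn.log (ContinuousOn.div
      (continuousOn_const.sub continuousOn_id) (continuousOn_const.sub continuousOn_id)
      fun t ht => by have := ht.2; intro h; rw [sub_eq_zero] at h; linarith) ?_
    intro t ht
    have h1 : (0:ℝ) < k - t := by have := ht.2; linarith
    have h2 : (0:ℝ) < 1 - t := by have := ht.2; linarith
    positivity
  have hJnonneg : ∀ {k : ℝ}, 1 < k → ∀ t ∈ Ioo (0:ℝ) 1, 0 ≤ Jfun C k t M := by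
    intro k hk t ht
    rw [Jfun_eq]
    exact mul_nonneg hC.le (E_nonneg _ (l_pos hk ht))
  have hJle : ∀ {k : ℝ}, 1 < k → ∀ t ∈ Ioo (0:ℝ) 1,
      Jfun C k t M ≤ C * Efun M (Real.log k) := by
    intro k hk t ht
    rw [Jfun_eq]
    exact mul_le_mul_of_nonneg_left (E_mono hM0 (Real.log_pos hk) (l_ge hk ht)) hC.le
  have hJdiff : ∀ {k : ℝ}, 1 < k → ∀ t ∈ Ioo (0:ℝ) 1,
      Jfun C k t (M-1) - Jfun C k t M = C * Dfun M (Real.log ((k - t) / (1 - t))) := by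
    intro k hk t ht
    rw [Jfun_eq, Jfun_eq, D_eq hM (l_pos hk ht)]
    ring
  have hBint : ∀ {k : ℝ}, 1 < k → IntegrableOn (fun t => Jfun C k t M) (Ioo (0:ℝ) 1) := by
    intro k hk
    refine Integrable.mono'
      ((integrableOn_const_iff (C := C * Efun M (Real.log k))).mpr (Or.inr ?_)) ?_ ?_
    · rw [Real.volume_Ioo]; norm_num
    · have hcont : ContinuousOn (fun t => C * Efun M (Real.log ((k - t) / (1 - t))))
          (Ioo (0:ℝ) 1) := by
        refine continuousOn_const.mul fun t ht => ?_
        show ContinuousWithinAt (Efun M ∘ fun t => Real.log ((k - t) / (1 - t))) (Ioo 0 1) t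
        exact ContinuousAt.comp_continuousWithinAt (g := Efun M)
          (f := fun t => Real.log ((k - t) / (1 - t)))
          (E_contAt hM0 (l_pos hk ht)) ((hlcont hk) t ht)
      exact (hcont.aestronglyMeasurable measurableSet_Ioo)
    · filter_upwards [ae_restrict_mem measurableSet_Ioo] with t ht
      rw [Real.norm_eq_abs, abs_of_nonneg (hJnonneg hk t ht)]
      exact hJle hk t ht
  have hAint : ∀ {k : ℝ}, 1 < k →
      IntegrableOn (fun t => (1-t) * (Jfun C k t (M-1) - Jfun C k t M)) (Ioo (0:ℝ) 1) := by
    intro k hk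
    have hφ : IntegrableOn (fun t => (1-t) * (C * Dfun M (Real.log ((k - t) / (1 - t)))))
        (Ioo (0:ℝ) 1) := by
      refine Integrable.mono' ((integrableOn_const_iff (C := C * R)).mpr (Or.inr ?_)) ?_ ?_
      · rw [Real.volume_Ioo]; norm_num
      · have hcont : ContinuousOn
            (fun t => (1-t) * (C * Dfun M (Real.log ((k - t) / (1 - t))))) (Ioo (0:ℝ) 1) := by
          refine (continuousOn_const.sub continuousOn_id).mul
            (continuousOn_const.mul fun t ht => ?_)
          show ContinuousWithinAt (Dfun M ∘ fun t => Real.log ((k - t) / (1 - t))) (Ioo 0 1) t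
          exact ContinuousAt.comp_continuousWithinAt (g := Dfun M)
            (f := fun t => Real.log ((k - t) / (1 - t)))
            (D_contAt hM (l_pos hk ht)) ((hlcont hk) t ht)
        exact hcont.aestronglyMeasurable measurableSet_Ioo
      · filter_upwards [ae_restrict_mem measurableSet_Ioo] with t ht
        have hD0 := D_nonneg hM (l_pos hk ht)
        have hDle := D_le hM (l_pos hk ht)
        rw [Real.norm_eq_abs, abs_mul, abs_of_nonneg (by nlinarith : (0:ℝ) ≤ C * Dfun M (Real.log ((k - t) / (1 - t))))]
        have h1t : |1 - t| ≤ 1 := by rw [abs_of_nonneg (by linarith [ht.2] : (0:ℝ) ≤ 1 - t)]; linarith [ht.1]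
        calc |1 - t| * (C * Dfun M (Real.log ((k - t) / (1 - t))))
            ≤ 1 * (C * Dfun M (Real.log ((k - t) / (1 - t)))) :=
              mul_le_mul_of_nonneg_right h1t (by nlinarith)
          _ = C * Dfun M (Real.log ((k - t) / (1 - t))) := one_mul _
          _ ≤ C * R := by rw [hRdef]; exact mul_le_mul_of_nonneg_left hDle hC.le
    refine hφ.congr_fun (fun t ht => ?_) measurableSet_Ioo
    rw [hJdiff hk t ht]
  -- split
  have hsplit : ∀ᶠ k in 𝓝[>] (1:ℝ),
      (∫ t in Ioo (0:ℝ) 1, ((t - k) * Jfun C k t M + (1 - t) * Jfun C k t (M - 1)))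
      = (∫ t in Ioo (0:ℝ) 1, (1-t) * (Jfun C k t (M-1) - Jfun C k t M))
        + (1-k) * ∫ t in Ioo (0:ℝ) 1, Jfun C k t M := by
    filter_upwards [self_mem_nhdsWithin] with k (hk : 1 < k)
    have hfun : (fun t => (t - k) * Jfun C k t M + (1 - t) * Jfun C k t (M - 1))
        = fun t => (1-t) * (Jfun C k t (M-1) - Jfun C k t M) + (1-k) * Jfun C k t M := by
      funext t; ring
    rw [hfun, integral_add (hAint hk) ((hBint hk).const_mul (1-k)), integral_const_mul]
  -- limit of the A part
  have hTA : Tendsto (fun k => ∫ t in Ioo (0:ℝ) 1, (1-t) * (Jfun C k t (M-1) - Jfun C k t M))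
      (𝓝[>] (1:ℝ)) (𝓝 (∫ t in Ioo (0:ℝ) 1, (1-t) * (C * R))) := by
    refine tendsto_integral_filter_of_dominated_convergence (bound := fun _ => C * R) ?_ ?_ ?_ ?_
    · filter_upwards [self_mem_nhdsWithin] with k (hk : 1 < k)
      exact (hAint hk).aestronglyMeasurable
    · filter_upwards [self_mem_nhdsWithin] with k (hk : 1 < k)
      filter_upwards [ae_restrict_mem measurableSet_Ioo] with t ht
      rw [hJdiff hk t ht]
      have hD0 := D_nonneg hM (l_pos hk ht)
      have hDle := D_le hM (l_pos hk ht)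
      rw [Real.norm_eq_abs, abs_mul, abs_of_nonneg (by nlinarith : (0:ℝ) ≤ C * Dfun M (Real.log ((k - t) / (1 - t))))]
      have h1t : |1 - t| ≤ 1 := by rw [abs_of_nonneg (by linarith [ht.2] : (0:ℝ) ≤ 1 - t)]; linarith [ht.1]
      calc |1 - t| * (C * Dfun M (Real.log ((k - t) / (1 - t))))
          ≤ 1 * (C * Dfun M (Real.log ((k - t) / (1 - t)))) :=
            mul_le_mul_of_nonneg_right h1t (by nlinarith)
        _ = C * Dfun M (Real.log ((k - t) / (1 - t))) := one_mul _
        _ ≤ C * R := by rw [hRdef]; exact mul_le_mul_of_nonneg_left hDle hC.le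
    · exact (integrableOn_const_iff (C := C * R)).mpr (Or.inr (by rw [Real.volume_Ioo]; norm_num))
    · filter_upwards [ae_restrict_mem measurableSet_Ioo] with t ht
      have h1 : Tendsto (fun k => Dfun M (Real.log ((k - t) / (1 - t)))) (𝓝[>] (1:ℝ)) (𝓝 R) :=
        (D_tendsto hM).comp (l_tendsto ht)
      have h2 : Tendsto (fun k => (1-t) * (C * Dfun M (Real.log ((k - t) / (1 - t)))))
          (𝓝[>] (1:ℝ)) (𝓝 ((1-t) * (C * R))) :=
        tendsto_const_nhds.mul (tendsto_const_nhds.mul h1)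
      refine Tendsto.congr' ?_ h2
      filter_upwards [self_mem_nhdsWithin] with k (hk : 1 < k)
      rw [hJdiff hk t ht]
  have hhalf : (∫ t in Ioo (0:ℝ) 1, (1-t) * (C * R)) = C * R * (1/2) := by
    rw [integral_mul_const]
    have h1 : (∫ t in Ioo (0:ℝ) 1, (1-t)) = 1/2 := by
      rw [← integral_Ioc_eq_integral_Ioo, ← intervalIntegral.integral_of_le zero_le_one]
      have : (∫ t in (0:ℝ)..1, (1 - t)) = (∫ t in (0:ℝ)..1, (1:ℝ)) - ∫ t in (0:ℝ)..1, t :=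
        intervalIntegral.integral_sub intervalIntegrable_const intervalIntegral.intervalIntegrable_id
      rw [this, intervalIntegral.integral_const, integral_id]
      norm_num
    rw [h1]; ring
  -- limit of the B part
  have hTB : Tendsto (fun k => (1-k) * ∫ t in Ioo (0:ℝ) 1, Jfun C k t M) (𝓝[>] (1:ℝ)) (𝓝 0) := by
    apply squeeze_zero_norm'
      (a := fun k => (k-1) * (C * ((Real.log 2 - Real.log (k-1)) + 1/M)))
    · filter_upwards [Ioo_mem_nhdsGT_of_mem (show (1:ℝ) ∈ Ico (1:ℝ) 2 from ⟨le_refl 1, one_lt_two⟩)]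
        with k hk
      obtain ⟨hk1, hk2⟩ := hk
      have hk0 : (0:ℝ) < k := by linarith
      have hI0 : 0 ≤ ∫ t in Ioo (0:ℝ) 1, Jfun C k t M :=
        setIntegral_nonneg measurableSet_Ioo fun t ht => hJnonneg hk1 t ht
      have hlogk_pos : 0 < Real.log k := Real.log_pos hk1
      have hlogk_le1 : Real.log k ≤ 1 := by
        have := Real.log_le_sub_one_of_pos hk0
        linarith
      have hlogk_ge : (k-1)/2 ≤ Real.log k := by
        have h := Real.log_le_sub_one_of_pos (show (0:ℝ) < 1/k by positivity)
        rw [one_div, Real.log_inv] at h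
        have hki : 1/k ≥ 1/2 := by
          apply one_div_le_one_div_of_le <;> linarith
        rw [one_div] at hki
        nlinarith [mul_inv_cancel₀ (ne_of_gt hk0), mul_pos (sub_pos.mpr hk1) (sub_pos.mpr hk2)]
      have hEb : Efun M (Real.log k) ≤ (Real.log 2 - Real.log (k-1)) + 1/M := by
        have h1 := E_bound hM0 hlogk_pos hlogk_le1
        have h2 : Real.log ((k-1)/2) ≤ Real.log (Real.log k) :=
          Real.log_le_log (by linarith) hlogk_ge
        rw [Real.log_div (by linarith) two_ne_zero] at h2
        linarith
      have hint : (∫ t in Ioo (0:ℝ) 1, Jfun C k t M) ≤ C * Efun M (Real.log k) := by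
        have h1 : (∫ t in Ioo (0:ℝ) 1, Jfun C k t M)
            ≤ ∫ _t in Ioo (0:ℝ) 1, C * Efun M (Real.log k) :=
          setIntegral_mono_on (hBint hk1)
            ((integrableOn_const_iff).mpr (Or.inr (by rw [Real.volume_Ioo]; norm_num)))
            measurableSet_Ioo (hJle hk1)
        have h2 : (∫ _t in Ioo (0:ℝ) 1, C * Efun M (Real.log k)) = C * Efun M (Real.log k) := by
          rw [setIntegral_const, Real.volume_real_Ioo]
          norm_num
        linarith
      have hnorm : ‖(1-k) * ∫ t in Ioo (0:ℝ) 1, Jfun C k t M‖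
          = (k-1) * ∫ t in Ioo (0:ℝ) 1, Jfun C k t M := by
        rw [norm_mul, Real.norm_eq_abs, Real.norm_eq_abs, abs_of_nonpos (by linarith),
          abs_of_nonneg hI0]
        ring
      rw [hnorm]
      have hE0 : 0 ≤ Efun M (Real.log k) := E_nonneg _ hlogk_pos
      have hfinal : (∫ t in Ioo (0:ℝ) 1, Jfun C k t M)
          ≤ C * ((Real.log 2 - Real.log (k-1)) + 1/M) :=
        le_trans hint (mul_le_mul_of_nonneg_left hEb hC.le)
      exact mul_le_mul_of_nonneg_left hfinal (by linarith)
    · have h1 : Tendsto (fun k : ℝ => k - 1) (𝓝[>] (1:ℝ)) (𝓝[>] (0:ℝ)) := by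
        rw [tendsto_nhdsWithin_iff]
        constructor
        · have h : Tendsto (fun k : ℝ => k - 1) (𝓝 1) (𝓝 0) := by
            have hc : Continuous fun k : ℝ => k - 1 := continuous_id.sub continuous_const
            simpa using hc.tendsto 1
          exact h.mono_left nhdsWithin_le_nhds
        · filter_upwards [self_mem_nhdsWithin] with k (hk : 1 < k)
          exact sub_pos.mpr hk
      have h2 : Tendsto (fun x : ℝ => Real.log x * x) (𝓝[>] (0:ℝ)) (𝓝 0) := by
        simpa using tendsto_log_mul_rpow_nhdsGT_zero one_pos
      have h3 : Tendsto (fun k : ℝ => Real.log (k-1) * (k-1)) (𝓝[>] (1:ℝ)) (𝓝 0) := h2.comp h1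
      have h4 : Tendsto (fun k : ℝ => k - 1) (𝓝[>] (1:ℝ)) (𝓝 0) :=
        h1.mono_right nhdsWithin_le_nhds
      have h5 : Tendsto (fun k : ℝ => (k-1) * (C * (Real.log 2 + 1/M))
          - C * (Real.log (k-1) * (k-1))) (𝓝[>] (1:ℝ))
          (𝓝 (0 * (C * (Real.log 2 + 1/M)) - C * 0)) :=
        (h4.mul_const _).sub (tendsto_const_nhds.mul h3)
      simp only [zero_mul, mul_zero, sub_zero] at h5
      refine h5.congr fun k => by ring
  -- assemble
  have harg : (1 + 1 / (2 * M - 1)) / (1 - 1 / (2 * M - 1)) = M / (M - 1) := by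
    have h1 : (2*M - 1) ≠ 0 := by intro h; nlinarith
    have h2 : (M - 1) ≠ 0 := by intro h; nlinarith
    have h3 : 1 - 1 / (2 * M - 1) ≠ 0 := by
      rw [sub_ne_zero]
      intro h
      have : 2*M - 1 = 1 := by
        field_simp at h
        linarith
      nlinarith
    rw [div_eq_div_iff h3 h2]
    field_simp
    ring
  have hVeq : C * ((1 / 2) * Real.log ((1 + 1 / (2 * M - 1)) / (1 - 1 / (2 * M - 1))))
      = (∫ t in Ioo (0:ℝ) 1, (1-t) * (C * R)) + 0 := by
    rw [hhalf, harg, ← hRdef]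
    ring
  rw [hVeq]
  exact Tendsto.congr' (EventuallyEq.symm hsplit) (hTA.add hTB)
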